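/- Residue-transformation formula (case a+b < p, w | p-(a+b), max{a,b} < p-(a+b)): Let k be a field of characteristic p, w ≥ 2, x ∈ k, α, β ∈ k[[s]], a, b ≥ 1 with a+b < p and w | (p - (a+b)); set q = (p-(a+b))/w and suppose max{a,b} < p - (a+b). Writing α = ∑ αᵢ sⁱ, β = ∑ βⱼ s^j, one has res_{s=0} ( −(1/q)(x/s)^q (aα dβ − bβ dα) ) = x^q ∑_{i+j=q} (b + wj) αᵢ βⱼ, where the identity −(1/q)(aj − bi) = wj + b holds in 𝔽_p for i + j = q. -/

import Mathlib

/-- The derivative `d/ds` on formal Laurent series, `(∑ aₙ sⁿ)' = ∑ n aₙ sⁿ⁻¹`. -/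
noncomputable def lderiv {R : Type*} [CommRing R] (f : LaurentSeries R) : LaurentSeries R where
  coeff n := (n + 1 : ℤ) • f.coeff (n + 1)
  isPWO_support' := by
    refine Set.IsPWO.mono
      (Set.IsPWO.image_of_monotone f.isPWO_support
        (f := fun n : ℤ => n - 1) (fun x y h => by simpa using sub_le_sub_right h 1)) ?_
    intro n hn
    have : f.coeff (n + 1) ≠ 0 := by
      intro h0
      simp [Function.mem_support, h0] at hn
    exact ⟨n + 1, this, by ring⟩

open Finset

theorem ofPowerSeries_coeff_neg' {R : Type*} [Semiring R] (f : PowerSeries R) {n : ℤ}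
    (hn : n < 0) : (HahnSeries.ofPowerSeries ℤ R f).coeff n = 0 := by
  rw [HahnSeries.ofPowerSeries_apply]
  apply HahnSeries.embDomain_notin_range
  rintro ⟨m, hm⟩
  simp only [Nat.castOrderEmbedding_apply] at hm
  omega

theorem lderiv_ofPowerSeries' {R : Type*} [CommRing R] (f : PowerSeries R) :
    lderiv (HahnSeries.ofPowerSeries ℤ R f) =
      HahnSeries.ofPowerSeries ℤ R f.derivativeFun := by
  apply HahnSeries.coeff_injective
  funext n
  show (n + 1 : ℤ) • (HahnSeries.ofPowerSeries ℤ R f).coeff (n + 1) = _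
  rcases le_or_gt 0 n with hn | hn
  · obtain ⟨m, rfl⟩ := Int.eq_ofNat_of_zero_le hn
    have h1 : ((m : ℤ) + 1) = ((m + 1 : ℕ) : ℤ) := by push_cast; ring
    rw [h1, HahnSeries.ofPowerSeries_apply_coeff]
    have h2 : ((m : ℤ)) = ((m : ℕ) : ℤ) := rfl
    rw [h2, HahnSeries.ofPowerSeries_apply_coeff, (show ∀ (g : PowerSeries R) (n : ℕ), PowerSeries.coeff n g.derivativeFun = PowerSeries.coeff (n + 1) g * (n + 1) from fun g n => PowerSeries.coeff_derivative g n),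
      zsmul_eq_mul]
    push_cast
    ring
  · rw [ofPowerSeries_coeff_neg' f.derivativeFun hn]
    rcases lt_or_eq_of_le (by omega : n + 1 ≤ 0) with h | h
    · rw [ofPowerSeries_coeff_neg' f h, smul_zero]
    · rw [h, zero_smul]

theorem key_identity' (p : ℕ) (hp : p.Prime) {K : Type*} [Field K] [CharP K p]
    (w a b q : ℕ) (hw : 1 ≤ w) (hab1 : 1 ≤ a + b) (hab : a + b < p) (hq : p - (a + b) = q * w)
    (i j : ℕ) (hij : i + j = q) :
    -((q : K)⁻¹ * ((a : K) * (j : K) - (b : K) * (i : K))) =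
      (w : K) * (j : K) + (b : K) := by
  have hq1 : 1 ≤ q := by
    rcases Nat.eq_zero_or_pos q with h | h
    · subst h; simp at hq; omega
    · exact h
  have hqp : q < p := by
    have : q ≤ q * w := Nat.le_mul_of_pos_right q (by omega)
    omega
  have hq0 : (q : K) ≠ 0 := by
    intro h
    have hdvd := (CharP.cast_eq_zero_iff K p q).mp h
    have := Nat.le_of_dvd (by omega) hdvd
    omega
  have h1 : (q : K) * w = -((a : K) + b) := by
    have h2 : ((q * w : ℕ) : K) = ((p - (a + b) : ℕ) : K) := by rw [← hq]
    rw [Nat.cast_sub (le_of_lt hab), CharP.cast_eq_zero K p] at h2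
    push_cast at h2
    linear_combination h2
  have h2 : (i : K) + j = (q : K) := by
    have := congrArg (fun n : ℕ => (n : K)) hij
    push_cast at this
    exact this
  have h3 : (a : K) * j - (b : K) * i = (q : K) * (-((w : K) * j + b)) := by
    linear_combination (j : K) * h1 - (b : K) * h2
  rw [h3, inv_mul_cancel_left₀ hq0, neg_neg]

/-- Case (i) of Lemma 6.1: residue-transformation formula. With `q = (p-(a+b))/w`
and `max{a,b} < p-(a+b)`, the residue at `s = 0` of the 1-form
`−(1/q)(x/s)^q (aα dβ − bβ dα)` equals `x^q ∑_{i+j=q} (b + wj) αᵢ βⱼ`;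
the underlying identity `−(1/q)(aj − bi) = wj + b` holds in `𝔽_p` for `i+j = q`. -/
theorem residue_transformation_case_i (p : ℕ) (hp : p.Prime) (hp5 : 5 ≤ p)
    {k : Type*} [Field k] [CharP k p] (w a b q : ℕ) (hw : 2 ≤ w)
    (ha : 1 ≤ a) (hb : 1 ≤ b) (hab : a + b < p)
    (hq : p - (a + b) = q * w) (hmax : max a b < p - (a + b))
    (x : k) (α β : PowerSeries k) :
    (((-((q : k)⁻¹ * x ^ q)) •
          (HahnSeries.single (-(q : ℤ)) (1 : k) *
            ((a : LaurentSeries k) * HahnSeries.ofPowerSeries ℤ k α *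
                lderiv (HahnSeries.ofPowerSeries ℤ k β) -
              (b : LaurentSeries k) * HahnSeries.ofPowerSeries ℤ k β *
                lderiv (HahnSeries.ofPowerSeries ℤ k α)))).coeff (-1 : ℤ) =
        x ^ q * ∑ i ∈ Finset.range (q + 1),
          ((b : k) + (w : k) * ((q - i : ℕ) : k)) *
            PowerSeries.coeff i α * PowerSeries.coeff (q - i) β) ∧
      ∀ i j : ℕ, i + j = q →
        -((q : ZMod p)⁻¹ * ((a : ZMod p) * (j : ZMod p) - (b : ZMod p) * (i : ZMod p))) =
          (w : ZMod p) * (j : ZMod p) + (b : ZMod p) := by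
  haveI := Fact.mk hp
  have hq1 : 1 ≤ q := by
    rcases Nat.eq_zero_or_pos q with h | h
    · subst h; simp at hq; omega
    · exact h
  constructor
  · -- the residue computation
    set G : PowerSeries k :=
      (a : PowerSeries k) * α * PowerSeries.derivativeFun β -
        (b : PowerSeries k) * β * PowerSeries.derivativeFun α with hG
    have hA : (a : LaurentSeries k) * HahnSeries.ofPowerSeries ℤ k α *
          lderiv (HahnSeries.ofPowerSeries ℤ k β) -
        (b : LaurentSeries k) * HahnSeries.ofPowerSeries ℤ k β *
          lderiv (HahnSeries.ofPowerSeries ℤ k α) =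
        HahnSeries.ofPowerSeries ℤ k G := by
      rw [hG, lderiv_ofPowerSeries', lderiv_ofPowerSeries', map_sub, map_mul, map_mul,
        map_mul, map_mul, map_natCast, map_natCast]
    rw [hA, HahnSeries.coeff_smul, smul_eq_mul]
    have hm1 : (-1 : ℤ) = ((q - 1 : ℕ) : ℤ) + (-(q : ℤ)) := by omega
    rw [hm1, HahnSeries.coeff_single_mul_add, one_mul, HahnSeries.ofPowerSeries_apply_coeff]
    -- compute the coefficient of G
    have hαβ : PowerSeries.coeff (q - 1) (α * PowerSeries.derivativeFun β) =
        ∑ i ∈ Finset.range (q + 1),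
          ((q - i : ℕ) : k) * (PowerSeries.coeff i α * PowerSeries.coeff (q - i) β) := by
      rw [PowerSeries.coeff_mul, Finset.Nat.sum_antidiagonal_eq_sum_range_succ_mk]
      have hqq : (q - 1).succ = q := by omega
      rw [hqq, Finset.sum_range_succ]
      have hlast : ((q - q : ℕ) : k) *
          (PowerSeries.coeff q α * PowerSeries.coeff (q - q) β) = 0 := by
        simp
      rw [hlast, add_zero]
      refine Finset.sum_congr rfl fun i hi => ?_
      rw [Finset.mem_range] at hi
      dsimp only
      rw [(show ∀ (g : PowerSeries k) (n : ℕ), PowerSeries.coeff n g.derivativeFun = PowerSeries.coeff (n + 1) g * (n + 1) from fun g n => PowerSeries.coeff_derivative g n)]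
      have h1 : q - 1 - i + 1 = q - i := by omega
      have h4 : ((q - 1 - i : ℕ) : k) + 1 = ((q - i : ℕ) : k) := by
        rw [← h1]; push_cast; ring
      rw [h1]
      linear_combination (PowerSeries.coeff i α * PowerSeries.coeff (q - i) β) * h4
    have hβα : PowerSeries.coeff (q - 1) (β * PowerSeries.derivativeFun α) =
        ∑ i ∈ Finset.range (q + 1),
          ((i : ℕ) : k) * (PowerSeries.coeff i α * PowerSeries.coeff (q - i) β) := by
      rw [PowerSeries.coeff_mul, Finset.Nat.sum_antidiagonal_eq_sum_range_succ_mk]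
      have hqq : (q - 1).succ = q := by omega
      rw [hqq]
      rw [← Finset.sum_range_reflect
        (fun i => ((i : ℕ) : k) * (PowerSeries.coeff i α * PowerSeries.coeff (q - i) β))
        (q + 1)]
      rw [Finset.sum_range_succ]
      have hlast : ((q + 1 - 1 - q : ℕ) : k) *
          (PowerSeries.coeff (q + 1 - 1 - q) α *
            PowerSeries.coeff (q - (q + 1 - 1 - q)) β) = 0 := by
        simp
      rw [hlast, add_zero]
      refine Finset.sum_congr rfl fun j hj => ?_
      rw [Finset.mem_range] at hj
      dsimp only
      rw [(show ∀ (g : PowerSeries k) (n : ℕ), PowerSeries.coeff n g.derivativeFun = PowerSeries.coeff (n + 1) g * (n + 1) from fun g n => PowerSeries.coeff_derivative g n)]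
      have h1 : q - 1 - j + 1 = q - j := by omega
      have h2 : q + 1 - 1 - j = q - j := by omega
      have h3 : q - (q - j) = j := by omega
      have h4 : ((q - 1 - j : ℕ) : k) + 1 = ((q - j : ℕ) : k) := by
        rw [← h1]; push_cast; ring
      rw [h1, h2, h3]
      linear_combination (PowerSeries.coeff j β * PowerSeries.coeff (q - j) α) * h4
    have hGcoeff : PowerSeries.coeff (q - 1) G =
        ∑ i ∈ Finset.range (q + 1),
          ((a : k) * ((q - i : ℕ) : k) - (b : k) * (i : k)) *
            (PowerSeries.coeff i α * PowerSeries.coeff (q - i) β) := by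
      rw [hG, map_sub, ← map_natCast (PowerSeries.C) a, ← map_natCast (PowerSeries.C) b,
        mul_assoc, mul_assoc, PowerSeries.coeff_C_mul, PowerSeries.coeff_C_mul, hαβ, hβα,
        Finset.mul_sum, Finset.mul_sum, ← Finset.sum_sub_distrib]
      refine Finset.sum_congr rfl fun i hi => ?_
      ring
    rw [hGcoeff, Finset.mul_sum, Finset.mul_sum]
    refine Finset.sum_congr rfl fun i hi => ?_
    rw [Finset.mem_range] at hi
    have hkey := key_identity' p hp (K := k) w a b q (by omega) (by omega) hab hq i (q - i) (by omega)
    linear_combination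
      (x ^ q * PowerSeries.coeff i α * PowerSeries.coeff (q - i) β) * hkey
  · intro i j hij
    exact key_identity' p hp (K := ZMod p) w a b q (by omega) (by omega) hab hq i j hij
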